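/- Let m, o : {1,…,r} → {1,…,n} be weakly increasing functions, set α_i = #{j : m(j) = i} and β_j = #{i : o(i) = j}, and let P_m = {u ∈ S_r : m∘u = m} and P_o = {u ∈ S_r : o∘u = o}. Then the number of (P_m, P_o) double cosets in S_r (i.e., the cardinality of the quotient of S_r by the relation v ∼ w iff v = p·w·s for some p ∈ P_m, s ∈ P_o) equals the number of n×n matrices of nonnegative integers with row sums (α_1,…,α_n) and column sums (β_1,…,β_n). -/

import Mathlib

open Matrix BigOperators Finset

section aux

variable {r n : ℕ}

/-- Glue fiberwise equivalences into a permutation. -/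
lemma exists_perm_of_fiber_card_eq {ι : Type*} [DecidableEq ι] [Fintype ι]
    (a b : Fin r → ι)
    (h : ∀ x, (univ.filter fun k => a k = x).card = (univ.filter fun k => b k = x).card) :
    ∃ q : Equiv.Perm (Fin r), ∀ k, a (q k) = b k := by
  have e : ∀ x, {k : Fin r // b k = x} ≃ {k : Fin r // a k = x} := fun x =>
    Fintype.equivOfCardEq (by
      simp only [Fintype.card_subtype]
      exact (h x).symm)
  refine ⟨((Equiv.sigmaFiberEquiv b).symm.trans (Equiv.sigmaCongrRight e)).trans
      (Equiv.sigmaFiberEquiv a), fun k => ?_⟩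
  simp only [Equiv.trans_apply, Equiv.sigmaFiberEquiv, Equiv.sigmaCongrRight,
    Equiv.coe_fn_symm_mk, Equiv.coe_fn_mk]
  exact (e (b k) ⟨k, rfl⟩).2

instance instFintypeSigmaSigmaFinMatrix (n : ℕ) (M : Matrix (Fin n) (Fin n) ℕ) :
    Fintype (Σ i' : Fin n, Σ j' : Fin n, Fin (M i' j')) :=
  @Sigma.instFintype _ _ (fun i' => (inferInstance : Fintype (Σ j' : Fin n, Fin (M i' j')))) _

lemma card_sigma_fiber (M : Matrix (Fin n) (Fin n) ℕ) (i j : Fin n) :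
    Fintype.card {x : Σ i' : Fin n, Σ j' : Fin n, Fin (M i' j') // x.1 = i ∧ x.2.1 = j}
      = M i j := by
  refine Fintype.card_congr ?_ |>.trans (Fintype.card_fin _)
  refine ⟨fun x => Fin.cast (congrArg₂ M x.2.1 x.2.2) x.1.2.2,
    fun t => ⟨⟨i, j, t⟩, rfl, rfl⟩, ?_, ?_⟩
  · rintro ⟨⟨i', j', t⟩, h1, h2⟩
    dsimp only at h1 h2
    subst h1; subst h2
    rfl
  · intro t; rfl

end aux

theorem stmt16 (r n : ℕ) (m o : Fin r → Fin n) (hm : Monotone m) (ho : Monotone o) :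
    Set.ncard
      (Set.range fun w : Equiv.Perm (Fin r) =>
        {v : Equiv.Perm (Fin r) | ∃ p s : Equiv.Perm (Fin r),
          (∀ i, m (p i) = m i) ∧ (∀ i, o (s i) = o i) ∧ v = (p.trans w).trans s}) =
    Set.ncard
      {M : Matrix (Fin n) (Fin n) ℕ |
        (∀ i, ∑ j, M i j = (Finset.univ.filter fun l => m l = i).card) ∧
        (∀ j, ∑ i, M i j = (Finset.univ.filter fun l => o l = j).card)} := by
  classical
  set F : Equiv.Perm (Fin r) → Set (Equiv.Perm (Fin r)) := fun w =>
    {v : Equiv.Perm (Fin r) | ∃ p s : Equiv.Perm (Fin r),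
      (∀ i, m (p i) = m i) ∧ (∀ i, o (s i) = o i) ∧ v = (p.trans w).trans s} with hF
  set Φ : Equiv.Perm (Fin r) → Matrix (Fin n) (Fin n) ℕ := fun w i j =>
    (univ.filter fun k => m k = i ∧ o (w k) = j).card with hΦ
  -- the double coset relation
  set R : Equiv.Perm (Fin r) → Equiv.Perm (Fin r) → Prop := fun w v =>
    ∃ p s : Equiv.Perm (Fin r),
      (∀ i, m (p i) = m i) ∧ (∀ i, o (s i) = o i) ∧ v = (p.trans w).trans s with hR
  have hFR : ∀ w, F w = {v | R w v} := fun w => rfl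
  have Rrefl : ∀ w, R w w := fun w =>
    ⟨Equiv.refl _, Equiv.refl _, fun _ => rfl, fun _ => rfl, by ext x; rfl⟩
  have Rsymm : ∀ {w v}, R w v → R v w := by
    rintro w v ⟨p, s, hp, hs, rfl⟩
    refine ⟨p.symm, s.symm, fun i => ?_, fun i => ?_, by ext x; simp⟩
    · conv_rhs => rw [← p.apply_symm_apply i]
      rw [hp]
    · conv_rhs => rw [← s.apply_symm_apply i]
      rw [hs]
  have Rtrans : ∀ {w v u}, R w v → R v u → R w u := by
    rintro w v u ⟨p, s, hp, hs, rfl⟩ ⟨p', s', hp', hs', rfl⟩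
    exact ⟨p'.trans p, s.trans s', fun i => by simp [hp, hp'], fun i => by simp [hs, hs'],
      by ext x; rfl⟩
  have hFiff : ∀ w v, F w = F v ↔ R w v := by
    intro w v
    constructor
    · intro h
      have : v ∈ F v := Rrefl v
      rw [← h] at this
      exact this
    · intro h
      ext u
      exact ⟨fun hu => Rtrans (Rsymm h) hu, fun hu => Rtrans h hu⟩
  -- Φ is constant on double cosets
  have hΦinv : ∀ w v, R w v → Φ w = Φ v := by
    rintro w v ⟨p, s, hp, hs, rfl⟩
    funext i j
    have key := Fintype.card_congr (Equiv.subtypeEquiv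
      (p := fun k => m k = i ∧ o (((p.trans w).trans s) k) = j)
      (q := fun k => m k = i ∧ o (w k) = j) p
      (fun k => by simp only [Equiv.trans_apply, hp, hs]))
    rw [Fintype.card_subtype, Fintype.card_subtype] at key
    exact key.symm
  -- equality of Φ implies same double coset
  have hΦR : ∀ w v, Φ w = Φ v → R w v := by
    intro w v h
    obtain ⟨q, hq⟩ := exists_perm_of_fiber_card_eq
      (fun k => (m k, o (w k))) (fun k => (m k, o (v k))) (fun x => by
        have := congrFun (congrFun h x.1) x.2
        simp only [hΦ] at this
        simpa [Prod.ext_iff] using this)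
    have hqm : ∀ k, m (q k) = m k := fun k => congrArg Prod.fst (hq k)
    have hqo : ∀ k, o (w (q k)) = o (v k) := fun k => congrArg Prod.snd (hq k)
    refine ⟨q, (w.symm.trans q.symm).trans v, hqm, fun x => ?_, by ext k; simp⟩
    simpa using (hqo (q.symm (w.symm x))).symm.trans
      (by rw [q.apply_symm_apply, w.apply_symm_apply])
  have hker : ∀ w v, F w = F v ↔ Φ w = Φ v := fun w v =>
    (hFiff w v).trans ⟨fun h => hΦinv w v h, fun h => hΦR w v h⟩
  -- range of Φ is the matrix set
  have hrange : Set.range Φ =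
      {M : Matrix (Fin n) (Fin n) ℕ |
        (∀ i, ∑ j, M i j = (Finset.univ.filter fun l => m l = i).card) ∧
        (∀ j, ∑ i, M i j = (Finset.univ.filter fun l => o l = j).card)} := by
    ext M
    constructor
    · rintro ⟨w, rfl⟩
      constructor
      · intro i
        rw [Finset.card_eq_sum_card_fiberwise (f := fun k => o (w k))
          (t := univ) (fun x _ => mem_univ _)]
        refine Finset.sum_congr rfl fun j _ => ?_
        simp only [hΦ]
        congr 1
        rw [Finset.filter_filter]
      · intro j
        have hcol : (univ.filter fun l => o l = j).card
            = (univ.filter fun k => o (w k) = j).card := by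
          refine Finset.card_bij' (fun k _ => w.symm k) (fun k _ => w k) ?_ ?_ ?_ ?_
          · intro k hk; simp only [mem_filter, mem_univ, true_and,
              w.apply_symm_apply] at hk ⊢; exact hk
          · intro k hk; simpa using hk
          · intro k _; simp
          · intro k _; simp
        rw [hcol, Finset.card_eq_sum_card_fiberwise (f := fun k => m k)
          (t := univ) (fun x _ => mem_univ _)]
        refine Finset.sum_congr rfl fun i _ => ?_
        simp only [hΦ]
        congr 1
        rw [Finset.filter_filter]
        congr 1
        ext k
        exact and_comm
    · rintro ⟨h1, h2⟩
      -- build a permutation realizing M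
      have c1 : ∀ i : Fin n, Fintype.card {k : Fin r // m k = i}
          = Fintype.card (Σ j : Fin n, Fin (M i j)) := by
        intro i
        simp [Fintype.card_subtype, h1 i]
      have c2 : ∀ j : Fin n, Fintype.card {k : Fin r // o k = j}
          = Fintype.card (Σ i : Fin n, Fin (M i j)) := by
        intro j
        simp [Fintype.card_subtype, h2 j]
      let e1 : Fin r ≃ Σ i : Fin n, Σ j : Fin n, Fin (M i j) :=
        (Equiv.sigmaFiberEquiv m).symm.trans
          (Equiv.sigmaCongrRight fun i => Fintype.equivOfCardEq (c1 i))
      let e2 : Fin r ≃ Σ j : Fin n, Σ i : Fin n, Fin (M i j) :=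
        (Equiv.sigmaFiberEquiv o).symm.trans
          (Equiv.sigmaCongrRight fun j => Fintype.equivOfCardEq (c2 j))
      let sw : (Σ i : Fin n, Σ j : Fin n, Fin (M i j))
          ≃ (Σ j : Fin n, Σ i : Fin n, Fin (M i j)) :=
        ⟨fun x => ⟨x.2.1, x.1, x.2.2⟩, fun x => ⟨x.2.1, x.1, x.2.2⟩,
          fun ⟨i, j, t⟩ => rfl, fun ⟨j, i, t⟩ => rfl⟩
      refine ⟨(e1.trans sw).trans e2.symm, ?_⟩
      have he1 : ∀ k, (e1 k).1 = m k := fun k => rfl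
      have he2 : ∀ k, (e2 k).1 = o k := fun k => rfl
      have hw : ∀ k, o (((e1.trans sw).trans e2.symm) k) = (e1 k).2.1 := by
        intro k
        have := he2 (((e1.trans sw).trans e2.symm) k)
        simp only [Equiv.trans_apply, Equiv.apply_symm_apply] at this
        exact this.symm
      funext i j
      have : (univ.filter fun k => m k = i ∧
          o (((e1.trans sw).trans e2.symm) k) = j)
          = univ.filter fun k => (e1 k).1 = i ∧ (e1 k).2.1 = j := by
        refine Finset.filter_congr fun k _ => ?_
        rw [← he1 k, hw k]
      simp only [hΦ]
      rw [this, ← Fintype.card_subtype]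
      rw [← card_sigma_fiber M i j]
      exact Fintype.card_congr (Equiv.subtypeEquiv e1 fun k => Iff.rfl)
  -- conclude
  have hkerS : Setoid.ker F = Setoid.ker Φ := Setoid.ext fun a b => hker a b
  calc Set.ncard (Set.range F)
      = Nat.card (Set.range F) := (Nat.card_coe_set_eq _).symm
    _ = Nat.card (Quotient (Setoid.ker F)) :=
        Nat.card_congr (Setoid.quotientKerEquivRange F).symm
    _ = Nat.card (Quotient (Setoid.ker Φ)) := by rw [hkerS]
    _ = Nat.card (Set.range Φ) := Nat.card_congr (Setoid.quotientKerEquivRange Φ)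
    _ = Set.ncard (Set.range Φ) := Nat.card_coe_set_eq _
    _ = _ := by rw [hrange]
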